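/- lim_{n→∞} S_{A₁^{(n)}} / ( |p log₂ p + q log₂ q| · n ) = 1 (Theorem 1, part 3, first limit). Note |p log₂ p + q log₂ q| > 0 since 0 < p < 1, which follows from abcd ≠ 0. -/

import Mathlib

open Matrix Filter
open scoped BigOperators Classical

noncomputable section

/-- Index in `Fin 2` of a direction: `false` ↔ `-1` (index `0`), `true` ↔ `1` (index `1`). -/
def bidx (b : Bool) : Fin 2 := if b then 1 else 0

/-- The standard basis vector `e_j`, `j ∈ {-1,1}`, of `ℂ²`. -/
def eVec (b : Bool) : Fin 2 → ℂ := fun i => if i = bidx b then 1 else 0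

/-- The projection `e_j e_j†`. -/
def projC (b : Bool) : Matrix (Fin 2) (Fin 2) ℂ :=
  Matrix.single (bidx b) (bidx b) 1

/-- `P_j = e_j e_j† U`. -/
def pMat (U : Matrix (Fin 2) (Fin 2) ℂ) (b : Bool) : Matrix (Fin 2) (Fin 2) ℂ :=
  projC b * U

/-- The weight of a path `ξ = (ξ_n, …, ξ_1)` (here `ξ i` is step `i+1`):
`w(ξ) = P_{ξ_n} ⋯ P_{ξ_1} φ₀`. -/
def weight (U : Matrix (Fin 2) (Fin 2) ℂ) (φ₀ : Fin 2 → ℂ) {n : ℕ} (ξ : Fin n → Bool) :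
    Fin 2 → ℂ :=
  ((List.ofFn fun i => pMat U (ξ i)).reverse.prod).mulVec φ₀

/-- The complex inner product `⟨v, w⟩`, conjugate-linear in the first slot. -/
def cdot (v w : Fin 2 → ℂ) : ℂ := ∑ i, (starRingEnd ℂ) (v i) * w i

/-- The decoherence matrix restricted to a set `A` of pairs of paths. -/
def decMat (U : Matrix (Fin 2) (Fin 2) ℂ) (φ₀ : Fin 2 → ℂ) {n : ℕ}
    (A : Set ((Fin n → Bool) × (Fin n → Bool))) :
    Matrix (Fin n → Bool) (Fin n → Bool) ℂ :=
  Matrix.of fun ξ η =>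
    if (ξ, η) ∈ A then cdot (weight U φ₀ ξ) (weight U φ₀ η) else 0

/-- `ξ_1 + ⋯ + ξ_n ∈ ℤ`, each step being `±1`. -/
def pathSum {n : ℕ} (ξ : Fin n → Bool) : ℤ := ∑ i, (if ξ i then 1 else -1)

/-- `A₀^{(n)}`: pairs of paths with the same final direction (paths have length `n+1`). -/
def A0 (n : ℕ) : Set ((Fin (n+1) → Bool) × (Fin (n+1) → Bool)) :=
  {x | x.1 (Fin.last n) = x.2 (Fin.last n)}

/-- `A_P^{(n)}`: pairs of paths with the same final direction and the same endpoint. -/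
def AP (n : ℕ) : Set ((Fin (n+1) → Bool) × (Fin (n+1) → Bool)) :=
  {x | x.1 (Fin.last n) = x.2 (Fin.last n) ∧ pathSum x.1 = pathSum x.2}

/-- `A₁^{(n)}`: the diagonal pairs. -/
def A1 (n : ℕ) : Set ((Fin (n+1) → Bool) × (Fin (n+1) → Bool)) :=
  {x | x.1 = x.2}

/-- The von Neumann entropy `S(D) = −Σᵢ λᵢ log₂ λᵢ`, summing over the eigenvalues with
multiplicity (the roots of the characteristic polynomial; they are real for a PSD Hermitian
matrix), with the convention `0 · log₂ 0 = 0`. -/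
def vnEntropy {I : Type*} [Fintype I] [DecidableEq I] (D : Matrix I I ℂ) : ℝ :=
  -((D.charpoly.roots).map fun lam => lam.re * Real.logb 2 lam.re).sum

/-- The real projection `e_j e_j†`. -/
def projR (b : Bool) : Matrix (Fin 2) (Fin 2) ℝ :=
  Matrix.single (bidx b) (bidx b) 1

/-- The stochastic matrix `M = [[p, q], [q, p]]` of the correlated random walk, `q = 1 − p`. -/
def rwM (p : ℝ) : Matrix (Fin 2) (Fin 2) ℝ := !![p, 1-p; 1-p, p]

/-- The initial vector `φ = (q₀, p₀)ᵀ` of the correlated random walk, `q₀ = 1 − p₀`. -/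
def rwφ (p₀ : ℝ) : Fin 2 → ℝ := ![1 - p₀, p₀]

/-- `P̃_{ξ_n} ⋯ P̃_{ξ_2} φ_{ξ_1}`, where `P̃_j = e_j e_j† M` and `φ_j = e_j e_j† φ`. -/
def rwVec (p p₀ : ℝ) : {n : ℕ} → (Fin n → Bool) → (Fin 2 → ℝ)
  | 0, _ => rwφ p₀
  | n + 1, ξ =>
      ((List.ofFn fun i : Fin n => projR (ξ i.succ) * rwM p).reverse.prod).mulVec
        ((projR (ξ 0)).mulVec (rwφ p₀))

/-- `p_L^{(n)}(j)`: the probability that the `(p₀,p)`-correlated random walk is at `j`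
at time `n`, having arrived from the left. -/
def pL (p p₀ : ℝ) (n : ℕ) (j : ℤ) : ℝ :=
  ∑ ξ ∈ Finset.univ.filter (fun ξ : Fin n → Bool => pathSum ξ = j), rwVec p p₀ ξ 0

/-- `p_R^{(n)}(j)`: the probability that the `(p₀,p)`-correlated random walk is at `j`
at time `n`, having arrived from the right. -/
def pR (p p₀ : ℝ) (n : ℕ) (j : ℤ) : ℝ :=
  ∑ ξ ∈ Finset.univ.filter (fun ξ : Fin n → Bool => pathSum ξ = j), rwVec p p₀ ξ 1

/-! ### Auxiliary development -/

/-- The probability of a path of the correlated random walk. -/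
def probPath (p p₀ : ℝ) : {n : ℕ} → (Fin (n+1) → Bool) → ℝ
  | 0, ξ => if ξ 0 then p₀ else 1 - p₀
  | n+1, ξ =>
      (if ξ (Fin.last (n+1)) = ξ ((Fin.last n).castSucc) then p else 1-p) *
        probPath p p₀ (ξ ∘ Fin.castSucc)

lemma probPath_snoc (p p₀ : ℝ) {n : ℕ} (ζ : Fin (n+1) → Bool) (b : Bool) :
    probPath p p₀ (Fin.snoc ζ b) =
      (if b = ζ (Fin.last n) then p else 1-p) * probPath p p₀ ζ := by
  simp only [probPath, Fin.snoc_last, Fin.snoc_castSucc, Fin.snoc_comp_castSucc]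

lemma probPath_nonneg {p p₀ : ℝ} (hp0 : 0 ≤ p) (hp1 : p ≤ 1) (h0 : 0 ≤ p₀) (h1 : p₀ ≤ 1) :
    ∀ {n : ℕ} (ξ : Fin (n+1) → Bool), 0 ≤ probPath p p₀ ξ := by
  intro n
  induction n with
  | zero => intro ξ; show 0 ≤ if ξ 0 then p₀ else 1 - p₀; split <;> linarith
  | succ n ih =>
      intro ξ
      show 0 ≤ (if _ then p else 1-p) * probPath p p₀ (ξ ∘ Fin.castSucc)
      have := ih (ξ ∘ Fin.castSucc)
      have h : (0:ℝ) ≤ (if ξ (Fin.last (n+1)) = ξ ((Fin.last n).castSucc) then p else 1-p) := by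
        split <;> linarith
      positivity

lemma sum_fin1 (g : (Fin 1 → Bool) → ℝ) :
    ∑ ξ : Fin 1 → Bool, g ξ = g (fun _ => true) + g (fun _ => false) := by
  rw [Fintype.sum_equiv (Equiv.funUnique (Fin 1) Bool) g (fun b => g (fun _ => b))
    (fun ξ => congrArg g (funext fun i => congrArg ξ (Fin.eq_zero i))), Fintype.sum_bool]

lemma sum_snoc_eq {n : ℕ} (f : (Fin (n+2) → Bool) → ℝ) :
    ∑ ξ : Fin (n+2) → Bool, f ξ =
      ∑ ζ : Fin (n+1) → Bool, ∑ b : Bool, f (Fin.snoc ζ b) := by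
  exact ((Fintype.sum_equiv ((Equiv.prodComm (Fin (n+1) → Bool) Bool).trans
      (Fin.snocEquiv (fun _ => Bool)))
      (fun pr : (Fin (n+1) → Bool) × Bool => f (Fin.snoc pr.1 pr.2)) f
      (fun pr => rfl)).symm).trans
    (Fintype.sum_prod_type (f := fun pr : (Fin (n+1) → Bool) × Bool => f (Fin.snoc pr.1 pr.2)))

lemma sum_probPath (p p₀ : ℝ) : ∀ n : ℕ, ∑ ξ : Fin (n+1) → Bool, probPath p p₀ ξ = 1 := by
  intro n
  induction n with
  | zero =>
      rw [sum_fin1 (fun ξ => probPath p p₀ ξ)]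
      have e1 : probPath p p₀ (fun _ : Fin 1 => true) = p₀ := rfl
      have e2 : probPath p p₀ (fun _ : Fin 1 => false) = 1 - p₀ := rfl
      rw [e1, e2]; ring
  | succ n ih =>
      rw [sum_snoc_eq (fun ξ => probPath p p₀ ξ)]
      have : ∀ ζ : Fin (n+1) → Bool,
          ∑ b : Bool, probPath p p₀ (Fin.snoc ζ b) = probPath p p₀ ζ := by
        intro ζ
        rw [Fintype.sum_bool, probPath_snoc, probPath_snoc]
        rcases Bool.eq_false_or_eq_true (ζ (Fin.last n)) with h | h <;> rw [h] <;> simp <;> ring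
      rw [Finset.sum_congr rfl (fun ζ _ => this ζ), ih]

/-- Chain rule step for `x log x`. -/
lemma mul_logb_step {t r : ℝ} (ht : 0 < t) (hr : 0 ≤ r) :
    (t*r) * Real.logb 2 (t*r) = r * (t * Real.logb 2 t) + t * (r * Real.logb 2 r) := by
  rcases eq_or_lt_of_le hr with h | h
  · rw [← h]; simp
  · rw [Real.logb_mul (ne_of_gt ht) (ne_of_gt h)]; ring

lemma sum_probPath_logb (p p₀ : ℝ) (hp0 : 0 < p) (hp1 : p < 1) (h0 : 0 ≤ p₀) (h1 : p₀ ≤ 1) :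
    ∀ n : ℕ, ∑ ξ : Fin (n+1) → Bool, probPath p p₀ ξ * Real.logb 2 (probPath p p₀ ξ) =
      ((1-p₀) * Real.logb 2 (1-p₀) + p₀ * Real.logb 2 p₀) +
        n * (p * Real.logb 2 p + (1-p) * Real.logb 2 (1-p)) := by
  intro n
  induction n with
  | zero =>
      rw [sum_fin1 (fun ξ => probPath p p₀ ξ * Real.logb 2 (probPath p p₀ ξ))]
      have e1 : probPath p p₀ (fun _ : Fin 1 => true) = p₀ := rfl
      have e2 : probPath p p₀ (fun _ : Fin 1 => false) = 1 - p₀ := rfl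
      rw [e1, e2]
      push_cast
      ring
  | succ n ih =>
      rw [sum_snoc_eq (fun ξ => probPath p p₀ ξ * Real.logb 2 (probPath p p₀ ξ))]
      have key : ∀ ζ : Fin (n+1) → Bool,
          ∑ b : Bool, probPath p p₀ (Fin.snoc ζ b) * Real.logb 2 (probPath p p₀ (Fin.snoc ζ b)) =
          probPath p p₀ ζ * (p * Real.logb 2 p + (1-p) * Real.logb 2 (1-p)) +
            probPath p p₀ ζ * Real.logb 2 (probPath p p₀ ζ) := by
        intro ζ
        have hr := probPath_nonneg (le_of_lt hp0) (le_of_lt hp1) h0 h1 ζ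
        rw [Fintype.sum_bool, probPath_snoc, probPath_snoc]
        rcases Bool.eq_false_or_eq_true (ζ (Fin.last n)) with h | h <;> rw [h] <;> simp only
          [Bool.true_eq_false, Bool.false_eq_true, if_true, if_false, ite_true, ite_false] <;>
        · rw [mul_logb_step hp0 hr, mul_logb_step (by linarith) hr]; ring
      rw [Finset.sum_congr rfl (fun ζ _ => key ζ), Finset.sum_add_distrib, ← Finset.sum_mul,
        sum_probPath, ih]
      push_cast
      ring

/-! ### Weights are supported on a single coordinate -/

lemma stdBasis_mulVec (i : Fin 2) (u : Fin 2 → ℂ) :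
    (Matrix.single i i (1:ℂ)).mulVec u = fun j => if j = i then u i else 0 := by
  funext j
  simp only [Matrix.mulVec, dotProduct, Fin.sum_univ_two]
  fin_cases i <;> fin_cases j <;>
    simp [Matrix.single, Matrix.of_apply]

lemma pMat_mulVec (U : Matrix (Fin 2) (Fin 2) ℂ) (b : Bool) (v : Fin 2 → ℂ) :
    (pMat U b).mulVec v = fun j => if j = bidx b then (U.mulVec v) (bidx b) else 0 := by
  rw [pMat, ← Matrix.mulVec_mulVec, projC, stdBasis_mulVec]

lemma weight_one (U : Matrix (Fin 2) (Fin 2) ℂ) (φ₀ : Fin 2 → ℂ) (ξ : Fin 1 → Bool) :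
    weight U φ₀ ξ = (pMat U (ξ 0)).mulVec φ₀ := by
  simp [weight]

lemma weight_succ (U : Matrix (Fin 2) (Fin 2) ℂ) (φ₀ : Fin 2 → ℂ) {n : ℕ}
    (ξ : Fin (n+2) → Bool) :
    weight U φ₀ ξ = (pMat U (ξ (Fin.last (n+1)))).mulVec (weight U φ₀ (ξ ∘ Fin.castSucc)) := by
  show (_ : Matrix (Fin 2) (Fin 2) ℂ).mulVec φ₀ = _
  rw [weight, Matrix.mulVec_mulVec]
  congr 1
  rw [List.ofFn_succ' (fun i : Fin (n+2) => pMat U (ξ i)), List.concat_eq_append,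
    List.reverse_append, List.reverse_cons, List.reverse_nil, List.nil_append,
    List.singleton_append, List.prod_cons]
  rfl

lemma cdot_indicator (k : Fin 2) (s : ℂ) :
    cdot (fun j => if j = k then s else 0) (fun j => if j = k then s else 0) =
      (Complex.normSq s : ℂ) := by
  rw [cdot, Fin.sum_univ_two]
  fin_cases k <;> simp [Complex.normSq_eq_conj_mul_self]

lemma weight_spec (a b c d α β : ℂ)
    (hnb : Complex.normSq b = 1 - Complex.normSq a)
    (hnc : Complex.normSq c = 1 - Complex.normSq a)
    (hnd : Complex.normSq d = Complex.normSq a)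
    (hinit : Complex.normSq (a*α + b*β) = 1 - Complex.normSq (c*α + d*β)) :
    ∀ {n : ℕ} (ξ : Fin (n+1) → Bool), ∃ s : ℂ,
      weight !![a, b; c, d] ![α, β] ξ = (fun j => if j = bidx (ξ (Fin.last n)) then s else 0) ∧
      Complex.normSq s = probPath (Complex.normSq a) (Complex.normSq (c*α + d*β)) ξ := by
  intro n
  induction n with
  | zero =>
      intro ξ
      refine ⟨(!![a, b; c, d].mulVec ![α, β]) (bidx (ξ 0)), ?_, ?_⟩
      · rw [weight_one, pMat_mulVec]
        have : Fin.last 0 = 0 := rfl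
        rw [this]
      · show _ = if ξ 0 then _ else _
        rcases Bool.eq_false_or_eq_true (ξ 0) with h | h <;> rw [h] <;>
          simp [bidx, Matrix.mulVec, dotProduct, Fin.sum_univ_two, hinit]
  | succ n ih =>
      intro ξ
      obtain ⟨s, hw, hs⟩ := ih (ξ ∘ Fin.castSucc)
      set b₀ := ξ ((Fin.last n).castSucc) with hb₀
      set b₁ := ξ (Fin.last (n+1)) with hb₁
      have hcomp : (ξ ∘ Fin.castSucc) (Fin.last n) = b₀ := rfl
      refine ⟨!![a, b; c, d] (bidx b₁) (bidx b₀) * s, ?_, ?_⟩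
      · rw [weight_succ, pMat_mulVec, hw, hcomp]
        funext j
        congr 1
        rw [Matrix.mulVec, dotProduct, Fin.sum_univ_two]
        rcases Bool.eq_false_or_eq_true b₀ with h | h <;> rw [h] <;> simp [bidx] <;> exact Or.inl rfl
      · rw [Complex.normSq_mul, hs]
        show _ = (if b₁ = b₀ then _ else _) * _
        rcases Bool.eq_false_or_eq_true b₁ with h1 | h1 <;>
          rcases Bool.eq_false_or_eq_true b₀ with h0 | h0 <;> rw [h1, h0] <;>
          simp [bidx, hnb, hnc, hnd]

/-! ### Diagonal decoherence matrix and its entropy -/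

lemma charpoly_diagonal {I : Type*} [Fintype I] [DecidableEq I] (f : I → ℂ) :
    (Matrix.diagonal f).charpoly = ∏ i, (Polynomial.X - Polynomial.C (f i)) := by
  have : charmatrix (Matrix.diagonal f) =
      Matrix.diagonal (fun i => Polynomial.X - Polynomial.C (f i)) := by
    ext i j
    by_cases h : i = j
    · subst h; rw [Matrix.charmatrix_apply_eq, Matrix.diagonal_apply_eq,
        Matrix.diagonal_apply_eq]
    · rw [Matrix.charmatrix_apply_ne _ _ _ h, Matrix.diagonal_apply_ne _ h,
        Matrix.diagonal_apply_ne _ h, map_zero, neg_zero]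
  rw [Matrix.charpoly, this, Matrix.det_diagonal]

lemma vnEntropy_diagonal {I : Type*} [Fintype I] [DecidableEq I] (f : I → ℝ) :
    vnEntropy (Matrix.diagonal (fun i => (f i : ℂ))) =
      -∑ i, f i * Real.logb 2 (f i) := by
  rw [vnEntropy, _root_.charpoly_diagonal]
  have hroots : (∏ i, (Polynomial.X - Polynomial.C ((f i : ℂ)))).roots =
      Finset.univ.val.map (fun i => (f i : ℂ)) := by
    have h := Polynomial.roots_multiset_prod_X_sub_C (Finset.univ.val.map (fun i => (f i : ℂ)))
    rw [Multiset.map_map] at h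
    exact h
  rw [hroots, Multiset.map_map]
  have hcg : Multiset.map ((fun lam : ℂ => lam.re * Real.logb 2 lam.re) ∘ fun i => ((f i : ℂ)))
      Finset.univ.val = Multiset.map (fun i => f i * Real.logb 2 (f i)) Finset.univ.val :=
    Multiset.map_congr rfl (fun i _ => by simp)
  rw [hcg]
  rfl

lemma tendsto_aux (H H₀ : ℝ) (hH : 0 < H) :
    Filter.Tendsto (fun n : ℕ => (H₀ + n * H) / (H * (n + 1))) Filter.atTop (nhds 1) := by
  have heq : ∀ n : ℕ, (H₀ + n * H) / (H * (n + 1)) = (H₀ - H) / (H * (n + 1)) + 1 := by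
    intro n
    have hne : H * ((n:ℝ) + 1) ≠ 0 := by positivity
    field_simp
    ring
  simp only [heq]
  have h1 : Filter.Tendsto (fun n : ℕ => H * ((n:ℝ) + 1)) Filter.atTop Filter.atTop := by
    apply Filter.Tendsto.const_mul_atTop hH
    exact Filter.tendsto_atTop_add_const_right _ _ tendsto_natCast_atTop_atTop
  have h0 : Filter.Tendsto (fun n : ℕ => (H₀ - H) / (H * ((n:ℝ) + 1)))
      Filter.atTop (nhds 0) := Filter.Tendsto.div_atTop tendsto_const_nhds h1
  simpa using h0.add tendsto_const_nhds

/-- `lim_{n→∞} S_{A₁^{(n)}} / (|p log₂ p + q log₂ q| n) = 1`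
(Theorem 1, part 3, first limit; paths of length `n+1`). -/
theorem tendsto_vnEntropy_decMat_A1
    (a b c d α β : ℂ)
    (hU : !![a, b; c, d] ∈ Matrix.unitaryGroup (Fin 2) ℂ)
    (habcd : a * b * c * d ≠ 0)
    (hφ : ‖α‖ ^ 2 + ‖β‖ ^ 2 = 1)
    (p q p₀ q₀ : ℝ)
    (hp : p = ‖a‖ ^ 2) (hq : q = 1 - p)
    (hp₀ : p₀ = ‖c * α + d * β‖ ^ 2) (hq₀ : q₀ = 1 - p₀) :
    Filter.Tendsto
      (fun n : ℕ =>
        vnEntropy (decMat !![a, b; c, d] ![α, β] (A1 n)) /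
          (|p * Real.logb 2 p + q * Real.logb 2 q| * (n + 1)))
      Filter.atTop (nhds 1) := by
  classical
  have hne : a ≠ 0 ∧ b ≠ 0 ∧ c ≠ 0 ∧ d ≠ 0 := by
    refine ⟨?_, ?_, ?_, ?_⟩ <;> intro h <;> apply habcd <;> rw [h] <;> ring
  obtain ⟨ha0, hb0, hc0, hd0⟩ := hne
  have hsMM : star !![a, b; c, d] * !![a, b; c, d] = 1 := hU.1
  have hMMs : !![a, b; c, d] * star !![a, b; c, d] = 1 := hU.2
  have ha : (starRingEnd ℂ) a * a + (starRingEnd ℂ) c * c = 1 := by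
    have h := congrArg (fun N : Matrix (Fin 2) (Fin 2) ℂ => N 0 0) hsMM
    simpa [Matrix.mul_apply, Fin.sum_univ_two, Matrix.star_apply, Matrix.one_apply] using h
  have hb : (starRingEnd ℂ) b * b + (starRingEnd ℂ) d * d = 1 := by
    have h := congrArg (fun N : Matrix (Fin 2) (Fin 2) ℂ => N 1 1) hsMM
    simpa [Matrix.mul_apply, Fin.sum_univ_two, Matrix.star_apply, Matrix.one_apply] using h
  have hab : (starRingEnd ℂ) a * b + (starRingEnd ℂ) c * d = 0 := by
    have h := congrArg (fun N : Matrix (Fin 2) (Fin 2) ℂ => N 0 1) hsMM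
    simpa [Matrix.mul_apply, Fin.sum_univ_two, Matrix.star_apply, Matrix.one_apply] using h
  have hrow : a * (starRingEnd ℂ) a + b * (starRingEnd ℂ) b = 1 := by
    have h := congrArg (fun N : Matrix (Fin 2) (Fin 2) ℂ => N 0 0) hMMs
    simpa [Matrix.mul_apply, Fin.sum_univ_two, Matrix.star_apply, Matrix.one_apply] using h
  have hab' : (starRingEnd ℂ) b * a + (starRingEnd ℂ) d * c = 0 := by
    have h := congrArg (starRingEnd ℂ) hab
    simp only [map_add, _root_.map_mul, Complex.conj_conj, map_zero] at h
    linear_combination h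
  -- real versions
  have haR : Complex.normSq a + Complex.normSq c = 1 := by
    rw [← Complex.normSq_eq_conj_mul_self, ← Complex.normSq_eq_conj_mul_self] at ha
    exact_mod_cast ha
  have hbR : Complex.normSq b + Complex.normSq d = 1 := by
    rw [← Complex.normSq_eq_conj_mul_self, ← Complex.normSq_eq_conj_mul_self] at hb
    exact_mod_cast hb
  have hrowR : Complex.normSq a + Complex.normSq b = 1 := by
    rw [Complex.mul_conj, Complex.mul_conj] at hrow
    exact_mod_cast hrow
  have hφn : Complex.normSq α + Complex.normSq β = 1 := by
    rw [Complex.sq_norm, Complex.sq_norm] at hφ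
    exact hφ
  have hC : (starRingEnd ℂ) (a*α+b*β) * (a*α+b*β) + (starRingEnd ℂ) (c*α+d*β) * (c*α+d*β)
      = (starRingEnd ℂ) α * α + (starRingEnd ℂ) β * β := by
    simp only [map_add, _root_.map_mul]
    linear_combination ((starRingEnd ℂ) α * α) * ha + ((starRingEnd ℂ) β * β) * hb +
      ((starRingEnd ℂ) α * β) * hab + ((starRingEnd ℂ) β * α) * hab'
  have hinitR : Complex.normSq (a*α + b*β) = 1 - Complex.normSq (c*α + d*β) := by
    rw [← Complex.normSq_eq_conj_mul_self, ← Complex.normSq_eq_conj_mul_self,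
      ← Complex.normSq_eq_conj_mul_self, ← Complex.normSq_eq_conj_mul_self] at hC
    have h3 : Complex.normSq (a*α+b*β) + Complex.normSq (c*α+d*β)
        = Complex.normSq α + Complex.normSq β := by exact_mod_cast hC
    linarith
  set pc := Complex.normSq a with hpcdef
  set p₀c := Complex.normSq (c*α + d*β) with hp₀cdef
  have hnb : Complex.normSq b = 1 - pc := by linarith
  have hnc : Complex.normSq c = 1 - pc := by linarith
  have hnd : Complex.normSq d = pc := by linarith
  have hpc : p = pc := by rw [hp, Complex.sq_norm]
  have hp₀c : p₀ = p₀c := by rw [hp₀, Complex.sq_norm]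
  have hpc0 : 0 < pc := Complex.normSq_pos.2 ha0
  have hpc1 : pc < 1 := by
    have : 0 < Complex.normSq b := Complex.normSq_pos.2 hb0
    linarith
  have h₀0 : 0 ≤ p₀c := Complex.normSq_nonneg _
  have h₀1 : p₀c ≤ 1 := by
    have := Complex.normSq_nonneg (a*α + b*β)
    linarith
  have hW : ∀ {n : ℕ} (ξ : Fin (n+1) → Bool), ∃ s : ℂ,
      weight !![a, b; c, d] ![α, β] ξ = (fun j => if j = bidx (ξ (Fin.last n)) then s else 0) ∧
      Complex.normSq s = probPath pc p₀c ξ :=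
    @fun n ξ => weight_spec a b c d α β hnb hnc hnd hinitR ξ
  have hdiag : ∀ n : ℕ, decMat !![a, b; c, d] ![α, β] (A1 n) =
      Matrix.diagonal (fun ξ : Fin (n+1) → Bool => ((probPath pc p₀c ξ : ℝ) : ℂ)) := by
    intro n
    ext ξ η
    by_cases hξη : ξ = η
    · subst hξη
      obtain ⟨s, hw, hs⟩ := hW ξ
      rw [Matrix.diagonal_apply_eq]
      show (if (ξ, ξ) ∈ A1 n then cdot (weight !![a, b; c, d] ![α, β] ξ)
          (weight !![a, b; c, d] ![α, β] ξ) else 0) = _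
      rw [if_pos (show (ξ, ξ) ∈ A1 n from rfl), hw, cdot_indicator, hs]
    · rw [Matrix.diagonal_apply_ne _ hξη]
      show (if (ξ, η) ∈ A1 n then cdot (weight !![a, b; c, d] ![α, β] ξ)
          (weight !![a, b; c, d] ![α, β] η) else 0) = 0
      rw [if_neg (show ¬ (ξ, η) ∈ A1 n from hξη)]
  set T := pc * Real.logb 2 pc + (1 - pc) * Real.logb 2 (1 - pc) with hTdef
  set S₀ := (1 - p₀c) * Real.logb 2 (1 - p₀c) + p₀c * Real.logb 2 p₀c with hS₀def
  have hvn : ∀ n : ℕ, vnEntropy (decMat !![a, b; c, d] ![α, β] (A1 n)) = -(S₀ + n * T) := by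
    intro n
    rw [hdiag n, vnEntropy_diagonal, sum_probPath_logb pc p₀c hpc0 hpc1 h₀0 h₀1 n]
  have hT_neg : T < 0 := by
    have h1 : pc * Real.logb 2 pc < 0 :=
      mul_neg_of_pos_of_neg hpc0 (Real.logb_neg one_lt_two hpc0 hpc1)
    have h2 : (1 - pc) * Real.logb 2 (1 - pc) < 0 :=
      mul_neg_of_pos_of_neg (by linarith) (Real.logb_neg one_lt_two (by linarith) (by linarith))
    rw [hTdef]; linarith
  have habs : |p * Real.logb 2 p + q * Real.logb 2 q| = -T := by
    rw [hq, hpc, abs_of_neg (by rw [hTdef] at hT_neg; exact hT_neg)]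
  apply Filter.Tendsto.congr _ (tendsto_aux (-T) (-S₀) (by linarith))
  intro n
  rw [hvn n, habs]
  ring
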